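/- In linear regression with squared loss where E_P[Y|X] = w_P*ᵀX and E_Q[Y|X] = w_Q*ᵀX may differ, for every w ∈ ℝᵈ: E_Q(h_w) ≤ 2λ_max(Σ_P^{-1}Σ_Q)·‖w - w_P*‖²_{Σ_P} + 2E_Q(h_{w_P*}). Consequently δ(ε) ≤ 2λ_max(Σ_P^{-1}Σ_Q)·ε + 2E_Q(h_{w_P*}) for all ε > 0. -/

import Mathlib

open Matrix

noncomputable def lamMax {d : ℕ} (A : Matrix (Fin d) (Fin d) ℝ) : ℝ :=
  sSup (spectrum ℝ A)

/-- Squared `Σ`-norm `‖v‖²_Σ = vᵀ Σ v`. -/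
def quadForm {d : ℕ} (A : Matrix (Fin d) (Fin d) ℝ) (v : Fin d → ℝ) : ℝ :=
  v ⬝ᵥ A.mulVec v

lemma rayleigh_le {d : ℕ} {M : Matrix (Fin d) (Fin d) ℝ} (hM : M.IsHermitian)
    (c : ℝ) (hc : ∀ i, hM.eigenvalues i ≤ c) (u : Fin d → ℝ) :
    u ⬝ᵥ M *ᵥ u ≤ c * (u ⬝ᵥ u) := by
  classical
  set U : Matrix (Fin d) (Fin d) ℝ := (hM.eigenvectorUnitary : Matrix (Fin d) (Fin d) ℝ) with hU
  have hUU : U * Uᵀ = 1 := by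
    have := (Matrix.mem_unitaryGroup_iff).mp hM.eigenvectorUnitary.2
    simpa [hU, Matrix.star_eq_conjTranspose, Matrix.conjTranspose_eq_transpose_of_trivial] using this
  have hst : star U = Uᵀ := by
    ext i j; simp [Matrix.star_eq_conjTranspose, Matrix.conjTranspose_apply]
  set y : Fin d → ℝ := u ᵥ* U with hy
  have h1 : u ⬝ᵥ M *ᵥ u = y ⬝ᵥ (diagonal hM.eigenvalues) *ᵥ y := by
    conv_lhs => rw [hM.spectral_theorem, Unitary.conjStarAlgAut_apply]
    rw [← hU, hst, ← mulVec_mulVec, ← mulVec_mulVec, dotProduct_mulVec,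
      mulVec_transpose, ← hy]
    norm_num [Function.comp]
  have h2 : y ⬝ᵥ y = u ⬝ᵥ u := by
    rw [hy]
    nth_rewrite 2 [← mulVec_transpose]
    rw [← dotProduct_mulVec, mulVec_mulVec, hUU, one_mulVec]
  have h3 : y ⬝ᵥ (diagonal hM.eigenvalues) *ᵥ y = ∑ i, hM.eigenvalues i * (y i)^2 := by
    simp [dotProduct, mulVec_diagonal, pow_two, mul_comm, mul_left_comm]
  have h4 : y ⬝ᵥ y = ∑ i, (y i)^2 := by simp [dotProduct, pow_two]
  rw [h1, h3, ← h2, h4, Finset.mul_sum]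
  exact Finset.sum_le_sum fun i _ => mul_le_mul_of_nonneg_right (hc i) (sq_nonneg _)

lemma quad_par {d : ℕ} (A : Matrix (Fin d) (Fin d) ℝ) (hA : A.PosSemidef)
    (a b : Fin d → ℝ) :
    quadForm A (a + b) ≤ 2 * quadForm A a + 2 * quadForm A b := by
  have h0 : (0:ℝ) ≤ quadForm A (a - b) := by
    have := hA.dotProduct_mulVec_nonneg (a - b)
    simpa [quadForm] using this
  have e : quadForm A (a+b) + quadForm A (a-b) = 2*quadForm A a + 2*quadForm A b := by
    simp only [quadForm, mulVec_add, mulVec_sub, dotProduct_add, dotProduct_sub,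
      add_dotProduct, sub_dotProduct]
    ring
  linarith

open scoped MatrixOrder in
theorem key {d : ℕ} [NeZero d] (SP SQ : Matrix (Fin d) (Fin d) ℝ)
    (hP : SP.PosDef) (hQ : SQ.PosSemidef) :
    (0 ≤ lamMax (SP⁻¹ * SQ)) ∧
    ∀ v, quadForm SQ v ≤ lamMax (SP⁻¹ * SQ) * quadForm SP v := by
  classical
  set S := CFC.sqrt SP with hSdef
  have hS : S.PosSemidef := Matrix.nonneg_iff_posSemidef.mp (CFC.sqrt_nonneg SP)
  have hSh : S.IsHermitian := hS.1
  have hSS : S * S = SP := CFC.sqrt_mul_sqrt_self SP hP.posSemidef.nonneg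
  have hdet : IsUnit S.det := by
    have h2 : S.det * S.det = SP.det := by rw [← det_mul, hSS]
    have h3 : S.det ≠ 0 := by
      intro h0
      rw [h0, mul_zero] at h2
      exact hP.det_pos.ne' h2.symm
    exact h3.isUnit
  have hSu : IsUnit S := (Matrix.isUnit_iff_isUnit_det S).2 hdet
  have hinv : S⁻¹ * S = 1 := nonsing_inv_mul S hdet
  have hinv' : S * S⁻¹ = 1 := mul_nonsing_inv S hdet
  have hSinvH : (S⁻¹).IsHermitian := hSh.inv
  set M := S⁻¹ * SQ * S⁻¹ with hMdef
  have hMpsd : M.PosSemidef := by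
    have := hQ.mul_mul_conjTranspose_same S⁻¹
    rwa [hSinvH.eq] at this
  have hMh : M.IsHermitian := hMpsd.1
  -- spectrum equality
  have hspec : spectrum ℝ (SP⁻¹ * SQ) = spectrum ℝ M := by
    set u : (Matrix (Fin d) (Fin d) ℝ)ˣ := hSu.unit⁻¹ with hu
    have hu1 : (u : Matrix (Fin d) (Fin d) ℝ) = S⁻¹ := by
      rw [hu, Matrix.coe_units_inv, hSu.unit_spec]
    have hu2 : ((u⁻¹ : _ˣ) : Matrix (Fin d) (Fin d) ℝ) = S := by
      rw [hu, inv_inv, hSu.unit_spec]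
    have hconj : SP⁻¹ * SQ = (u : Matrix (Fin d) (Fin d) ℝ) * M * ((u⁻¹ : _ˣ) : Matrix (Fin d) (Fin d) ℝ) := by
      rw [hu1, hu2, hMdef, ← hSS, Matrix.mul_inv_rev]
      simp only [Matrix.mul_assoc, hinv, Matrix.mul_one]
    rw [hconj]
    exact spectrum.units_conjugate
  have hbdd : BddAbove (spectrum ℝ M) := Set.Finite.bddAbove Matrix.finite_real_spectrum
  have hmem : ∀ i, hMh.eigenvalues i ∈ spectrum ℝ M := fun i =>
    hMh.eigenvalues_mem_spectrum_real i
  have hlam : ∀ i, hMh.eigenvalues i ≤ lamMax (SP⁻¹ * SQ) := by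
    intro i
    rw [lamMax, hspec]
    exact le_csSup hbdd (hmem i)
  have i0 : Fin d := ⟨0, Nat.pos_of_ne_zero (NeZero.ne d)⟩
  have hlam0 : 0 ≤ lamMax (SP⁻¹ * SQ) :=
    le_trans (hMpsd.eigenvalues_nonneg i0) (hlam i0)
  refine ⟨hlam0, fun v => ?_⟩
  have hray := rayleigh_le hMh _ hlam (S *ᵥ v)
  have hSt : Sᵀ = S := by
    ext i j
    conv_rhs => rw [← hSh.eq]
    simp [Matrix.conjTranspose_apply]
  have hl : (S *ᵥ v) ⬝ᵥ M *ᵥ (S *ᵥ v) = quadForm SQ v := by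
    rw [mulVec_mulVec, hMdef, Matrix.mul_assoc (S⁻¹ * SQ), hinv, Matrix.mul_one]
    nth_rewrite 1 [← hSt]
    rw [mulVec_transpose, ← dotProduct_mulVec, mulVec_mulVec, ← Matrix.mul_assoc, hinv', Matrix.one_mul, quadForm]
  have hr : (S *ᵥ v) ⬝ᵥ (S *ᵥ v) = quadForm SP v := by
    nth_rewrite 1 [← hSt]
    rw [mulVec_transpose, ← dotProduct_mulVec, mulVec_mulVec, hSS, quadForm]
  rw [hl, hr] at hray
  exact hray


/-- linear regression with possibly different risk minimizers
`w_P*`, `w_Q*`. With `E_P(h_w) = ‖w-w_P*‖²_{Σ_P}` and `E_Q(h_w) = ‖w-w_Q*‖²_{Σ_Q}`: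
`E_Q(h_w) ≤ 2 λ_max(Σ_P⁻¹Σ_Q) ‖w-w_P*‖²_{Σ_P} + 2 E_Q(h_{w_P*})`, and hence
`δ(ε) ≤ 2 λ_max(Σ_P⁻¹Σ_Q) ε + 2 E_Q(h_{w_P*})`. -/
theorem linreg_shifted_minimizers {d : ℕ} [NeZero d]
    (SP SQ : Matrix (Fin d) (Fin d) ℝ)
    (hP : SP.PosDef) (hQ : SQ.PosSemidef) (wP wQ : Fin d → ℝ) :
    (∀ w : Fin d → ℝ,
        quadForm SQ (w - wQ) ≤
          2 * lamMax (SP⁻¹ * SQ) * quadForm SP (w - wP)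
            + 2 * quadForm SQ (wP - wQ))
    ∧ (∀ ε : ℝ, 0 < ε →
        sSup {r : ℝ | ∃ w : Fin d → ℝ,
            quadForm SP (w - wP) ≤ ε ∧ r = quadForm SQ (w - wQ)} ≤
          2 * lamMax (SP⁻¹ * SQ) * ε + 2 * quadForm SQ (wP - wQ)) := by
  obtain ⟨hlam0, hkey⟩ := key SP SQ hP hQ
  have hqQ : ∀ x, 0 ≤ quadForm SQ x := by
    intro x
    have := hQ.dotProduct_mulVec_nonneg x
    simpa [quadForm] using this
  have part1 : ∀ w : Fin d → ℝ,
      quadForm SQ (w - wQ) ≤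
        2 * lamMax (SP⁻¹ * SQ) * quadForm SP (w - wP)
          + 2 * quadForm SQ (wP - wQ) := by
    intro w
    have hsplit : w - wQ = (w - wP) + (wP - wQ) := by abel
    have h1 := quad_par SQ hQ (w - wP) (wP - wQ)
    have h2 := hkey (w - wP)
    rw [hsplit]
    linarith
  refine ⟨part1, fun ε hε => ?_⟩
  apply Real.sSup_le
  · rintro r ⟨w, hw, rfl⟩
    have h1 := part1 w
    have h2 : 2 * lamMax (SP⁻¹ * SQ) * quadForm SP (w - wP)
        ≤ 2 * lamMax (SP⁻¹ * SQ) * ε :=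
      mul_le_mul_of_nonneg_left hw (by linarith)
    linarith
  · have := hqQ (wP - wQ)
    nlinarith
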